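/- Let γ : ℝ → ℝ² be a differentiable map with [γ(t), γ'(t)] = 1 for all t ∈ ℝ, let A : ℝ² → ℝ² be a linear map, and let H : ℝ → ℝ be a differentiable function such that A(γ(t)) = γ(H(t)) for all t ∈ ℝ. Then H'(t) = det A for all t ∈ ℝ. -/

import Mathlib

/-- The determinant of the 2×2 matrix whose columns are `u, v ∈ ℝ²`. -/
def det2 (u v : ℝ × ℝ) : ℝ := u.1 * v.2 - u.2 * v.1

lemma det_eq_det2 (A : (ℝ × ℝ) →ₗ[ℝ] (ℝ × ℝ)) :
    LinearMap.det A = det2 (A (1, 0)) (A (0, 1)) := by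
  rw [← LinearMap.det_toMatrix (Module.Basis.finTwoProd ℝ) A, Matrix.det_fin_two]
  simp [LinearMap.toMatrix_apply, det2, Module.Basis.finTwoProd_zero, Module.Basis.finTwoProd_one]
  ring

lemma apply_eq (A : (ℝ × ℝ) →ₗ[ℝ] (ℝ × ℝ)) (u : ℝ × ℝ) :
    A u = u.1 • A (1, 0) + u.2 • A (0, 1) := by
  rw [← map_smul, ← map_smul, ← map_add]
  congr 1
  simp [Prod.ext_iff]

lemma det2_map (A : (ℝ × ℝ) →ₗ[ℝ] (ℝ × ℝ)) (u v : ℝ × ℝ) :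
    det2 (A u) (A v) = LinearMap.det A * det2 u v := by
  rw [det_eq_det2, apply_eq A u, apply_eq A v]
  simp only [det2, Prod.fst_add, Prod.snd_add, Prod.smul_fst, Prod.smul_snd, smul_eq_mul]
  ring

lemma det2_smul (c : ℝ) (u v : ℝ × ℝ) : det2 u (c • v) = c * det2 u v := by
  simp only [det2, Prod.smul_fst, Prod.smul_snd, smul_eq_mul]; ring

theorem stmt_5 (γ : ℝ → ℝ × ℝ) (hγ : Differentiable ℝ γ)
    (hdet : ∀ t : ℝ, det2 (γ t) (deriv γ t) = 1)
    (A : (ℝ × ℝ) →ₗ[ℝ] (ℝ × ℝ)) (H : ℝ → ℝ) (hH : Differentiable ℝ H)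
    (hAγ : ∀ t : ℝ, A (γ t) = γ (H t)) :
    ∀ t : ℝ, deriv H t = LinearMap.det A := by
  intro t
  set Ac := LinearMap.toContinuousLinearMap A with hAc
  have h1 : HasDerivAt (fun s => A (γ s)) (A (deriv γ t)) t := by
    have := (Ac.hasFDerivAt (x := γ t)).comp_hasDerivAt t (hγ t).hasDerivAt
    exact this
  have h2 : HasDerivAt (fun s => γ (H s)) (deriv H t • deriv γ (H t)) t :=
    (hγ (H t)).hasDerivAt.scomp t (hH t).hasDerivAt
  have heq : A (deriv γ t) = deriv H t • deriv γ (H t) := by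
    have hfe : (fun s => A (γ s)) = fun s => γ (H s) := funext hAγ
    exact (hfe ▸ h1).unique h2
  have key : LinearMap.det A * 1 = deriv H t * 1 := by
    calc LinearMap.det A * 1 = LinearMap.det A * det2 (γ t) (deriv γ t) := by rw [hdet]
    _ = det2 (A (γ t)) (A (deriv γ t)) := (det2_map A _ _).symm
    _ = det2 (γ (H t)) (deriv H t • deriv γ (H t)) := by rw [hAγ, heq]
    _ = deriv H t * det2 (γ (H t)) (deriv γ (H t)) := det2_smul _ _ _
    _ = deriv H t * 1 := by rw [hdet]
  simpa using key.symm
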